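/- Let E/K be an elliptic curve over a number field K given by y² = x(x + u⁴)(x + v⁴) where u, v, w ∈ O_K satisfy u² + v² = w². Then the point P = (uv(u+w)(v+w), uvw(u+v)(v+w)(u+w)) lies on E(K) and satisfies 4P = (0, 0); in particular P has order 8 whenever it is nonzero and (0,0) has order 2. -/

import Mathlib

open WeierstrassCurve WeierstrassCurve.Affine NumberField

open Classical in
private theorem aux_stmt19 {F : Type*} [Field F] [CharZero F] (a b c : F)
    (hpyth : a ^ 2 + b ^ 2 = c ^ 2) (hsm : a * b * c * (a ^ 2 - b ^ 2) ≠ 0)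
    (W : Affine F)
    (hW : W = { a₁ := 0, a₂ := a ^ 4 + b ^ 4, a₃ := 0, a₄ := a ^ 4 * b ^ 4, a₆ := 0 }) :
    ∃ (hP : W.Nonsingular (a * b * (a + c) * (b + c)) (a * b * c * (a + b) * (b + c) * (a + c)))
      (h0 : W.Nonsingular 0 0),
      4 • (Point.some _ _ hP) = Point.some _ _ h0 ∧
        addOrderOf (Point.some _ _ hP : W.Point) = 8 ∧
        addOrderOf (Point.some _ _ h0 : W.Point) = 2 := by
  have ha1 : W.a₁ = 0 := by rw [hW]
  have ha2 : W.a₂ = a ^ 4 + b ^ 4 := by rw [hW]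
  have ha3 : W.a₃ = 0 := by rw [hW]
  have ha4 : W.a₄ = a ^ 4 * b ^ 4 := by rw [hW]
  have ha6 : W.a₆ = 0 := by rw [hW]
  have ha : a ≠ 0 := fun h => hsm (by rw [h]; ring)
  have hb : b ≠ 0 := fun h => hsm (by rw [h]; ring)
  have hc : c ≠ 0 := fun h => hsm (by rw [h]; ring)
  have hab2 : a ^ 2 - b ^ 2 ≠ 0 := fun h => hsm (by rw [h]; ring)
  have hab : a + b ≠ 0 := fun h => hab2 (by linear_combination (a - b) * h)
  have hac : a + c ≠ 0 := fun h => hb (by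
    have : b ^ 2 = 0 := by linear_combination hpyth + (c - a) * h
    exact pow_eq_zero_iff (two_ne_zero) |>.mp this)
  have hbc : b + c ≠ 0 := fun h => ha (by
    have : a ^ 2 = 0 := by linear_combination hpyth + (c - b) * h
    exact pow_eq_zero_iff (two_ne_zero) |>.mp this)
  set x1 : F := a * b * (a + c) * (b + c) with hx1def
  set y1 : F := a * b * c * (a + b) * (b + c) * (a + c) with hy1def
  have hy1 : y1 ≠ 0 := by
    rw [hy1def]
    exact mul_ne_zero (mul_ne_zero (mul_ne_zero (mul_ne_zero (mul_ne_zero ha hb) hc) hab) hbc) hac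
  have hy2 : (a ^ 2 * b ^ 2 * c ^ 2 : F) ≠ 0 := by
    exact mul_ne_zero (mul_ne_zero (pow_ne_zero 2 ha) (pow_ne_zero 2 hb)) (pow_ne_zero 2 hc)
  -- Nonsingularity of P
  have hP : W.Nonsingular x1 y1 := by
    rw [nonsingular_iff, equation_iff, ha1, ha2, ha3, ha4, ha6]
    constructor
    · rw [hx1def, hy1def]
      linear_combination (-(a^2*b^4*c^4) + -2*(a^2*b^5*c^3) + -(a^2*b^6*c^2) + -(a^3*b^3*c^4)
        + -3*(a^3*b^4*c^3) + -4*(a^3*b^5*c^2) + -2*(a^3*b^6*c) + -(a^4*b^2*c^4)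
        + -3*(a^4*b^3*c^3) + -3*(a^4*b^4*c^2) + -2*(a^4*b^5*c) + -(a^4*b^6)
        + -2*(a^5*b^2*c^3) + -4*(a^5*b^3*c^2) + -2*(a^5*b^4*c) + -(a^6*b^2*c^2)
        + -2*(a^6*b^3*c) + -(a^6*b^4)) * hpyth
    · right
      intro h
      apply hy1
      linear_combination h / 2
  -- Nonsingularity of 2P = (a²b², a²b²c²)
  have hQ : W.Nonsingular (a ^ 2 * b ^ 2) (a ^ 2 * b ^ 2 * c ^ 2) := by
    rw [nonsingular_iff, equation_iff, ha1, ha2, ha3, ha4, ha6]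
    constructor
    · linear_combination (-(a^4*b^4*c^2) - a^4*b^6 - a^6*b^4) * hpyth
    · right
      intro h
      apply hy2
      linear_combination h / 2
  -- Nonsingularity of (0,0)
  have h0 : W.Nonsingular (0 : F) (0 : F) := by
    rw [nonsingular_iff, equation_iff, ha1, ha2, ha3, ha4, ha6]
    constructor
    · ring
    · left
      intro h
      apply mul_ne_zero (pow_ne_zero 4 ha) (pow_ne_zero 4 hb)
      linear_combination -h
  have hne1 : y1 ≠ W.negY x1 y1 := by
    rw [negY, ha1, ha3]
    intro h
    exact hy1 (by linear_combination h / 2)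
  have hne2 : (a ^ 2 * b ^ 2 * c ^ 2 : F) ≠ W.negY (a ^ 2 * b ^ 2) (a ^ 2 * b ^ 2 * c ^ 2) := by
    rw [negY, ha1, ha3]
    intro h
    exact hy2 (by linear_combination h / 2)
  -- general doubling helper
  have key : ∀ {x₁ y₁ x₂ y₂ : F} (h₁ : W.Nonsingular x₁ y₁) (h₂ : W.Nonsingular x₂ y₂)
      (_ : y₁ ≠ W.negY x₁ y₁) (_ : W.addX x₁ x₁ (W.slope x₁ x₁ y₁ y₁) = x₂)
      (_ : W.addY x₁ x₁ y₁ (W.slope x₁ x₁ y₁ y₁) = y₂),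
      Point.some _ _ h₁ + Point.some _ _ h₁ = Point.some _ _ h₂ := by
    intro x₁ y₁ x₂ y₂ h₁ h₂ hne hx hy
    rw [Point.add_self_of_Y_ne hne]
    subst hx
    subst hy
    rfl
  -- slope at P
  have hL1 : W.slope x1 x1 y1 y1 = a * b + a * c + b * c := by
    rw [slope_of_Y_ne rfl hne1, div_eq_iff (sub_ne_zero.mpr hne1), negY, ha1, ha2, ha3, ha4,
      hx1def, hy1def]
    linear_combination (2*(a*b^3*c^2) + 2*(a*b^4*c) + (a^2*b^2*c^2) + 2*(a^2*b^3*c)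
      + 2*(a^2*b^4) + 2*(a^3*b*c^2) + 2*(a^3*b^2*c) + 2*(a^4*b*c) + 2*(a^4*b^2)) * hpyth
  have hX2 : W.addX x1 x1 (W.slope x1 x1 y1 y1) = a ^ 2 * b ^ 2 := by
    rw [hL1, addX, ha1, ha2, hx1def]
    linear_combination (-b^2 - a^2) * hpyth
  have hY2 : W.addY x1 x1 y1 (W.slope x1 x1 y1 y1) = a ^ 2 * b ^ 2 * c ^ 2 := by
    rw [hL1, addY, negY, negAddY, addX, ha1, ha2, ha3, hx1def, hy1def]
    linear_combination (b^3*c + a*b^2*c + a*b^3 + a^2*b*c + a^3*c + a^3*b) * hpyth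
  -- slope at 2P
  have hL2 : W.slope (a ^ 2 * b ^ 2) (a ^ 2 * b ^ 2) (a ^ 2 * b ^ 2 * c ^ 2)
      (a ^ 2 * b ^ 2 * c ^ 2) = c ^ 2 := by
    rw [slope_of_Y_ne rfl hne2, div_eq_iff (sub_ne_zero.mpr hne2), negY, ha1, ha2, ha3, ha4]
    linear_combination (2*(a^2*b^2*c^2) + 2*(a^2*b^4) + 2*(a^4*b^2)) * hpyth
  have hX0 : W.addX (a ^ 2 * b ^ 2) (a ^ 2 * b ^ 2) (W.slope (a ^ 2 * b ^ 2) (a ^ 2 * b ^ 2)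
      (a ^ 2 * b ^ 2 * c ^ 2) (a ^ 2 * b ^ 2 * c ^ 2)) = 0 := by
    rw [hL2, addX, ha1, ha2]
    linear_combination (-c^2 - b^2 - a^2) * hpyth
  have hY0 : W.addY (a ^ 2 * b ^ 2) (a ^ 2 * b ^ 2) (a ^ 2 * b ^ 2 * c ^ 2)
      (W.slope (a ^ 2 * b ^ 2) (a ^ 2 * b ^ 2) (a ^ 2 * b ^ 2 * c ^ 2)
        (a ^ 2 * b ^ 2 * c ^ 2)) = 0 := by
    rw [hL2, addY, negY, negAddY, addX, ha1, ha2, ha3]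
    linear_combination (c^4 + b^2*c^2 + a^2*c^2) * hpyth
  have e1 : Point.some _ _ hP + Point.some _ _ hP = Point.some _ _ hQ := key hP hQ hne1 hX2 hY2
  have e2 : Point.some _ _ hQ + Point.some _ _ hQ = Point.some _ _ h0 := key hQ h0 hne2 hX0 hY0
  have e4 : (4 : ℕ) • (Point.some _ _ hP) = Point.some _ _ h0 := by
    have h22 : (4 : ℕ) • (Point.some _ _ hP) = 2 • (2 • Point.some _ _ hP) := by
      rw [smul_smul]; norm_num
    rw [h22, two_nsmul (Point.some _ _ hP), e1, two_nsmul, e2]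
  have hz : Point.some _ _ h0 + Point.some _ _ h0 = (0 : W.Point) := by
    apply Point.add_of_Y_eq rfl
    rw [negY, ha1, ha3]
    ring
  haveI : Fact (Nat.Prime 2) := ⟨Nat.prime_two⟩
  refine ⟨hP, h0, e4, ?_, ?_⟩
  · -- order 8
    have h8 : (8 : ℕ) • (Point.some _ _ hP) = 0 := by
      have h24 : (8 : ℕ) • (Point.some _ _ hP) = 2 • ((4 : ℕ) • Point.some _ _ hP) := by
        rw [smul_smul]; norm_num
      rw [h24, e4, two_nsmul, hz]
    have hdvd : addOrderOf (Point.some _ _ hP : W.Point) ∣ 2 ^ 3 :=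
      addOrderOf_dvd_of_nsmul_eq_zero (by norm_num [h8])
    have hnd : ¬ addOrderOf (Point.some _ _ hP : W.Point) ∣ 4 := by
      intro h
      have h4 : (4 : ℕ) • (Point.some _ _ hP) = 0 := addOrderOf_dvd_iff_nsmul_eq_zero.mp h
      rw [e4] at h4
      exact Point.some_ne_zero h0 h4
    obtain ⟨i, hi, hio⟩ := (Nat.dvd_prime_pow Nat.prime_two).mp hdvd
    have hi3 : i = 3 := by
      by_contra h'
      apply hnd
      rw [hio]
      calc (2 : ℕ) ^ i ∣ 2 ^ 2 := pow_dvd_pow 2 (by omega)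
        _ = 4 := by norm_num
    rw [hio, hi3]
    norm_num
  · -- order 2
    exact addOrderOf_eq_prime (by rw [two_nsmul]; exact hz) (Point.some_ne_zero h0)

open Classical in
/-- Let `E/K` be the elliptic curve `y² = x(x + u⁴)(x + v⁴)` over a number
field `K`, where `u, v, w ∈ 𝓞 K` satisfy `u² + v² = w²` (and `uvw(u² − v²) ≠ 0`). Then
`P = (uv(u+w)(v+w), uvw(u+v)(v+w)(u+w))` lies on `E(K)` and satisfies `4P = (0, 0)`;
in particular `P` has order 8 and `(0,0)` has order 2. -/
theorem stmt_19 (K : Type*) [Field K] [NumberField K] (u v w : 𝓞 K)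
    (hpyth : u ^ 2 + v ^ 2 = w ^ 2) (hsm : u * v * w * (u ^ 2 - v ^ 2) ≠ 0)
    (W : Affine K)
    (hW : W = { a₁ := 0, a₂ := algebraMap (𝓞 K) K (u ^ 4 + v ^ 4), a₃ := 0,
                a₄ := algebraMap (𝓞 K) K (u ^ 4 * v ^ 4), a₆ := 0 }) :
    ∃ (hP : W.Nonsingular (algebraMap (𝓞 K) K (u * v * (u + w) * (v + w)))
        (algebraMap (𝓞 K) K (u * v * w * (u + v) * (v + w) * (u + w))))
      (h0 : W.Nonsingular 0 0),
      4 • (Point.some _ _ hP) = Point.some _ _ h0 ∧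
        addOrderOf (Point.some _ _ hP : W.Point) = 8 ∧
        addOrderOf (Point.some _ _ h0 : W.Point) = 2 := by
  have inj : Function.Injective (algebraMap (𝓞 K) K) := IsFractionRing.injective (𝓞 K) K
  set a := algebraMap (𝓞 K) K u with hadef
  set b := algebraMap (𝓞 K) K v with hbdef
  set c := algebraMap (𝓞 K) K w with hcdef
  have hpyth' : a ^ 2 + b ^ 2 = c ^ 2 := by
    rw [hadef, hbdef, hcdef, ← map_pow, ← map_pow, ← map_pow, ← map_add, hpyth]
  have hsm' : a * b * c * (a ^ 2 - b ^ 2) ≠ 0 := by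
    rw [hadef, hbdef, hcdef, ← map_pow, ← map_pow, ← map_sub, ← map_mul, ← map_mul, ← map_mul]
    exact fun h => hsm (inj (by rw [h, map_zero]))
  have hW' : W = { a₁ := 0, a₂ := a ^ 4 + b ^ 4, a₃ := 0, a₄ := a ^ 4 * b ^ 4, a₆ := 0 } := by
    rw [hW]
    congr 1
  have h := aux_stmt19 a b c hpyth' hsm' W hW'
  simp only [map_mul, map_add, ← hadef, ← hbdef, ← hcdef]
  exact h
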